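/- There are exactly 24 five-element vertex sets of Δ^1 × Δ^1 × Δ^2 spanning a simplex of class 2, and the group of symmetries of the simplotope generated by permuting coordinates within each factor (of order 2!·2!·3! = 24) acts simply transitively on them. -/

import Mathlib

/-- A vertex of `Π*_{2,1} = Δ¹ × Δ¹ × Δ²` in standard coordinates. -/
def IsVertex21 (x : Fin 2 ⊕ (Fin 2 ⊕ Fin 3) → ℝ) : Prop :=
  (∀ z, x z = 0 ∨ x z = 1) ∧
    x (Sum.inl 0) + x (Sum.inl 1) = 1 ∧
    x (Sum.inr (Sum.inl 0)) + x (Sum.inr (Sum.inl 1)) = 1 ∧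
    x (Sum.inr (Sum.inr 0)) + x (Sum.inr (Sum.inr 1)) + x (Sum.inr (Sum.inr 2)) = 1

/-- The matrix `[1|M_v]` of a 5-vertex simplex in reduced coordinates; the class of the
simplex is `|det|`. -/
def classMat21 (w : Fin 5 → (Fin 2 ⊕ (Fin 2 ⊕ Fin 3) → ℝ)) : Matrix (Fin 5) (Fin 5) ℝ :=
  Matrix.of fun r => ![1, w r (Sum.inl 0), w r (Sum.inr (Sum.inl 0)),
    w r (Sum.inr (Sum.inr 0)), w r (Sum.inr (Sum.inr 1))]

/-- A five-element vertex set of `Δ¹ × Δ¹ × Δ²` spanning a simplex of class 2. -/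
def IsClass2Set (s : Set (Fin 2 ⊕ (Fin 2 ⊕ Fin 3) → ℝ)) : Prop :=
  ∃ w : Fin 5 → (Fin 2 ⊕ (Fin 2 ⊕ Fin 3) → ℝ),
    s = Set.range w ∧ (∀ r, IsVertex21 (w r)) ∧ |(classMat21 w).det| = 2

/-- The group of symmetries of the simplotope generated by permuting coordinates within
each factor, of order `2!·2!·3! = 24`. -/
def permCoord (g : Equiv.Perm (Fin 2) × Equiv.Perm (Fin 2) × Equiv.Perm (Fin 3)) :
    Fin 2 ⊕ (Fin 2 ⊕ Fin 3) → Fin 2 ⊕ (Fin 2 ⊕ Fin 3) :=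
  Sum.elim (fun i => Sum.inl (g.1 i))
    (Sum.elim (fun i => Sum.inr (Sum.inl (g.2.1 i))) (fun j => Sum.inr (Sum.inr (g.2.2 j))))

/-- The induced action of such a symmetry on points of the simplotope. -/
def act (g : Equiv.Perm (Fin 2) × Equiv.Perm (Fin 2) × Equiv.Perm (Fin 3))
    (x : Fin 2 ⊕ (Fin 2 ⊕ Fin 3) → ℝ) : Fin 2 ⊕ (Fin 2 ⊕ Fin 3) → ℝ :=
  fun z => x (permCoord g z)


namespace Stmt18Aux

abbrev G24 := Equiv.Perm (Fin 2) × Equiv.Perm (Fin 2) × Equiv.Perm (Fin 3)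
abbrev P3 := Fin 2 × Fin 2 × Fin 3

/-! ### vertices -/

def vtx (p : P3) : Fin 2 ⊕ (Fin 2 ⊕ Fin 3) → ℝ :=
  Sum.elim (fun i => if p.1 = i then 1 else 0)
    (Sum.elim (fun i => if p.2.1 = i then 1 else 0) (fun j => if p.2.2 = j then 1 else 0))

lemma vtx_vertex (p : P3) : IsVertex21 (vtx p) := by
  obtain ⟨a, b, c⟩ := p
  refine ⟨fun z => ?_, ?_, ?_, ?_⟩
  · rcases z with i | i | j <;> simp only [vtx, Sum.elim_inl, Sum.elim_inr] <;>
      split <;> simp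
  · fin_cases a <;> norm_num [vtx, Fin.ext_iff]
  · fin_cases b <;> norm_num [vtx, Fin.ext_iff]
  · fin_cases c <;> norm_num [vtx, Fin.ext_iff]

lemma fin2_aux {a b : ℝ} (ha : a = 0 ∨ a = 1) (hb : b = 0 ∨ b = 1) (hs : a + b = 1) :
    ∃ i : Fin 2, a = (if i = 0 then (1:ℝ) else 0) ∧ b = (if i = 1 then (1:ℝ) else 0) := by
  rcases ha with h | h
  · exact ⟨1, by simp [h], by simp; linarith⟩
  · exact ⟨0, by simp [h], by simp; linarith⟩

lemma fin3_aux {a b c : ℝ} (ha : a = 0 ∨ a = 1) (hb : b = 0 ∨ b = 1) (hc : c = 0 ∨ c = 1)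
    (hs : a + b + c = 1) :
    ∃ i : Fin 3, a = (if i = 0 then (1:ℝ) else 0) ∧ b = (if i = 1 then (1:ℝ) else 0) ∧
      c = (if i = 2 then (1:ℝ) else 0) := by
  rcases ha with h | h
  · rcases hb with h' | h'
    · refine ⟨2, by simp [h], by simp [h'], by simp; linarith⟩
    · refine ⟨1, by simp [h], by simp [h'], ?_⟩
      rcases hc with h'' | h'' <;> simp [h''] <;> linarith
  · refine ⟨0, by simp [h], ?_, ?_⟩ <;>
      rcases hb with h' | h' <;> rcases hc with h'' | h'' <;> simp [h', h''] <;> linarith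

lemma vertex_to_vtx {x} (h : IsVertex21 x) : ∃ p : P3, x = vtx p := by
  obtain ⟨h01, h1, h2, h3⟩ := h
  obtain ⟨i, hi1, hi2⟩ := fin2_aux (h01 (Sum.inl 0)) (h01 (Sum.inl 1)) h1
  obtain ⟨j, hj1, hj2⟩ := fin2_aux (h01 (Sum.inr (Sum.inl 0))) (h01 (Sum.inr (Sum.inl 1))) h2
  obtain ⟨k, hk1, hk2, hk3⟩ := fin3_aux (h01 (Sum.inr (Sum.inr 0))) (h01 (Sum.inr (Sum.inr 1)))
    (h01 (Sum.inr (Sum.inr 2))) h3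
  refine ⟨(i, j, k), ?_⟩
  funext z
  rcases z with u | u | u <;> fin_cases u <;>
    simp only [vtx, Sum.elim_inl, Sum.elim_inr] <;>
    first
      | exact hi1 | exact hi2 | exact hj1 | exact hj2 | exact hk1 | exact hk2 | exact hk3

lemma vtx_inj : Function.Injective vtx := by
  rintro ⟨a, b, c⟩ ⟨a', b', c'⟩ h
  have h1 := congrFun h (Sum.inl a)
  have h2 := congrFun h (Sum.inr (Sum.inl b))
  have h3 := congrFun h (Sum.inr (Sum.inr c))
  simp only [vtx, Sum.elim_inl, Sum.elim_inr, if_pos rfl] at h1 h2 h3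
  have e1 : a' = a := by by_contra hne; rw [if_neg hne] at h1; norm_num at h1
  have e2 : b' = b := by by_contra hne; rw [if_neg hne] at h2; norm_num at h2
  have e3 : c' = c := by by_contra hne; rw [if_neg hne] at h3; norm_num at h3
  simp [Prod.ext_iff, e1, e2, e3]

/-! ### the group action -/

def rho (g : G24) (p : P3) : P3 :=
  (g.1.symm p.1, g.2.1.symm p.2.1, g.2.2.symm p.2.2)

lemma act_vtx (g : G24) (p : P3) : act g (vtx p) = vtx (rho g p) := by
  funext z
  rcases z with i | i | j <;>
    simp only [act, permCoord, Sum.elim_inl, Sum.elim_inr, vtx, rho, Equiv.symm_apply_eq]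

lemma rho_comp (g h : G24) (p : P3) : rho g (rho h p) = rho (h * g) p := by
  simp [rho, Prod.ext_iff, Equiv.Perm.mul_def, Equiv.symm_trans_apply]

lemma rho_one (p : P3) : rho 1 p = p := by simp [rho]; rfl

lemma act_comp (g h : G24) (x : Fin 2 ⊕ (Fin 2 ⊕ Fin 3) → ℝ) :
    act g (act h x) = act (h * g) x := by
  funext z
  rcases z with i | i | j <;>
    simp [act, permCoord, Equiv.Perm.mul_apply]

/-! ### finite encoding -/

def dec12 (n : Fin 12) : P3 :=
  (⟨n.val / 6, by omega⟩, ⟨n.val % 6 / 3, by omega⟩, ⟨n.val % 3, by omega⟩)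

def enc12 (p : P3) : Fin 12 :=
  ⟨6 * p.1.val + 3 * p.2.1.val + p.2.2.val, by omega⟩

lemma dec_enc : ∀ p : P3, dec12 (enc12 p) = p := by decide

lemma enc_dec : ∀ n : Fin 12, enc12 (dec12 n) = n := by decide

lemma dec12_inj : Function.Injective dec12 := fun a b h => by
  rw [← enc_dec a, ← enc_dec b, h]

def rho12 (g : G24) (n : Fin 12) : Fin 12 := enc12 (rho g (dec12 n))

lemma rho12_comp (g h : G24) (n : Fin 12) : rho12 g (rho12 h n) = rho12 (h * g) n := by
  simp [rho12, dec_enc, rho_comp]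

lemma rho12_one (n : Fin 12) : rho12 1 n = n := by
  simp [rho12, rho_one, enc_dec]

/-! ### integer determinant -/

def detN : ℕ → List (List ℤ) → ℤ
  | 0, _ => 1
  | _+1, [] => 1
  | n+1, r :: m =>
    ((List.range (n+1)).map
      (fun j => (-1)^j * r.getD j 0 * detN n (m.map (fun row => row.eraseIdx j)))).sum

lemma fsa_4_0_0 : ((0 : Fin 5) : Fin 5).succAbove (0 : Fin 4) = 1 := rfl
lemma fsa_4_0_1 : ((0 : Fin 5) : Fin 5).succAbove (1 : Fin 4) = 2 := rfl
lemma fsa_4_0_2 : ((0 : Fin 5) : Fin 5).succAbove (2 : Fin 4) = 3 := rfl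
lemma fsa_4_0_3 : ((0 : Fin 5) : Fin 5).succAbove (3 : Fin 4) = 4 := rfl
lemma fsa_4_1_0 : ((1 : Fin 5) : Fin 5).succAbove (0 : Fin 4) = 0 := rfl
lemma fsa_4_1_1 : ((1 : Fin 5) : Fin 5).succAbove (1 : Fin 4) = 2 := rfl
lemma fsa_4_1_2 : ((1 : Fin 5) : Fin 5).succAbove (2 : Fin 4) = 3 := rfl
lemma fsa_4_1_3 : ((1 : Fin 5) : Fin 5).succAbove (3 : Fin 4) = 4 := rfl
lemma fsa_4_2_0 : ((2 : Fin 5) : Fin 5).succAbove (0 : Fin 4) = 0 := rfl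
lemma fsa_4_2_1 : ((2 : Fin 5) : Fin 5).succAbove (1 : Fin 4) = 1 := rfl
lemma fsa_4_2_2 : ((2 : Fin 5) : Fin 5).succAbove (2 : Fin 4) = 3 := rfl
lemma fsa_4_2_3 : ((2 : Fin 5) : Fin 5).succAbove (3 : Fin 4) = 4 := rfl
lemma fsa_4_3_0 : ((3 : Fin 5) : Fin 5).succAbove (0 : Fin 4) = 0 := rfl
lemma fsa_4_3_1 : ((3 : Fin 5) : Fin 5).succAbove (1 : Fin 4) = 1 := rfl
lemma fsa_4_3_2 : ((3 : Fin 5) : Fin 5).succAbove (2 : Fin 4) = 2 := rfl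
lemma fsa_4_3_3 : ((3 : Fin 5) : Fin 5).succAbove (3 : Fin 4) = 4 := rfl
lemma fsa_4_4_0 : ((4 : Fin 5) : Fin 5).succAbove (0 : Fin 4) = 0 := rfl
lemma fsa_4_4_1 : ((4 : Fin 5) : Fin 5).succAbove (1 : Fin 4) = 1 := rfl
lemma fsa_4_4_2 : ((4 : Fin 5) : Fin 5).succAbove (2 : Fin 4) = 2 := rfl
lemma fsa_4_4_3 : ((4 : Fin 5) : Fin 5).succAbove (3 : Fin 4) = 3 := rfl
lemma fsa_3_0_0 : ((0 : Fin 4) : Fin 4).succAbove (0 : Fin 3) = 1 := rfl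
lemma fsa_3_0_1 : ((0 : Fin 4) : Fin 4).succAbove (1 : Fin 3) = 2 := rfl
lemma fsa_3_0_2 : ((0 : Fin 4) : Fin 4).succAbove (2 : Fin 3) = 3 := rfl
lemma fsa_3_1_0 : ((1 : Fin 4) : Fin 4).succAbove (0 : Fin 3) = 0 := rfl
lemma fsa_3_1_1 : ((1 : Fin 4) : Fin 4).succAbove (1 : Fin 3) = 2 := rfl
lemma fsa_3_1_2 : ((1 : Fin 4) : Fin 4).succAbove (2 : Fin 3) = 3 := rfl
lemma fsa_3_2_0 : ((2 : Fin 4) : Fin 4).succAbove (0 : Fin 3) = 0 := rfl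
lemma fsa_3_2_1 : ((2 : Fin 4) : Fin 4).succAbove (1 : Fin 3) = 1 := rfl
lemma fsa_3_2_2 : ((2 : Fin 4) : Fin 4).succAbove (2 : Fin 3) = 3 := rfl
lemma fsa_3_3_0 : ((3 : Fin 4) : Fin 4).succAbove (0 : Fin 3) = 0 := rfl
lemma fsa_3_3_1 : ((3 : Fin 4) : Fin 4).succAbove (1 : Fin 3) = 1 := rfl
lemma fsa_3_3_2 : ((3 : Fin 4) : Fin 4).succAbove (2 : Fin 3) = 2 := rfl
lemma fsa_2_0_0 : ((0 : Fin 3) : Fin 3).succAbove (0 : Fin 2) = 1 := rfl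
lemma fsa_2_0_1 : ((0 : Fin 3) : Fin 3).succAbove (1 : Fin 2) = 2 := rfl
lemma fsa_2_1_0 : ((1 : Fin 3) : Fin 3).succAbove (0 : Fin 2) = 0 := rfl
lemma fsa_2_1_1 : ((1 : Fin 3) : Fin 3).succAbove (1 : Fin 2) = 2 := rfl
lemma fsa_2_2_0 : ((2 : Fin 3) : Fin 3).succAbove (0 : Fin 2) = 0 := rfl
lemma fsa_2_2_1 : ((2 : Fin 3) : Fin 3).succAbove (1 : Fin 2) = 1 := rfl
lemma fsa_1_0_0 : ((0 : Fin 2) : Fin 2).succAbove (0 : Fin 1) = 1 := rfl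
lemma fsa_1_1_0 : ((1 : Fin 2) : Fin 2).succAbove (0 : Fin 1) = 0 := rfl
lemma fsucc_4_0 : Fin.succ (0 : Fin 4) = (1 : Fin 5) := rfl
lemma fsucc_4_1 : Fin.succ (1 : Fin 4) = (2 : Fin 5) := rfl
lemma fsucc_4_2 : Fin.succ (2 : Fin 4) = (3 : Fin 5) := rfl
lemma fsucc_4_3 : Fin.succ (3 : Fin 4) = (4 : Fin 5) := rfl
lemma fsucc_3_0 : Fin.succ (0 : Fin 3) = (1 : Fin 4) := rfl
lemma fsucc_3_1 : Fin.succ (1 : Fin 3) = (2 : Fin 4) := rfl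
lemma fsucc_3_2 : Fin.succ (2 : Fin 3) = (3 : Fin 4) := rfl
lemma fsucc_2_0 : Fin.succ (0 : Fin 2) = (1 : Fin 3) := rfl
lemma fsucc_2_1 : Fin.succ (1 : Fin 2) = (2 : Fin 3) := rfl
lemma fsucc_1_0 : Fin.succ (0 : Fin 1) = (1 : Fin 2) := rfl
lemma fval_5_0 : ((0 : Fin 5) : ℕ) = 0 := rfl
lemma fval_5_1 : ((1 : Fin 5) : ℕ) = 1 := rfl
lemma fval_5_2 : ((2 : Fin 5) : ℕ) = 2 := rfl
lemma fval_5_3 : ((3 : Fin 5) : ℕ) = 3 := rfl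
lemma fval_5_4 : ((4 : Fin 5) : ℕ) = 4 := rfl
lemma fval_4_0 : ((0 : Fin 4) : ℕ) = 0 := rfl
lemma fval_4_1 : ((1 : Fin 4) : ℕ) = 1 := rfl
lemma fval_4_2 : ((2 : Fin 4) : ℕ) = 2 := rfl
lemma fval_4_3 : ((3 : Fin 4) : ℕ) = 3 := rfl
lemma fval_3_0 : ((0 : Fin 3) : ℕ) = 0 := rfl
lemma fval_3_1 : ((1 : Fin 3) : ℕ) = 1 := rfl
lemma fval_3_2 : ((2 : Fin 3) : ℕ) = 2 := rfl
lemma fval_2_0 : ((0 : Fin 2) : ℕ) = 0 := rfl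
lemma fval_2_1 : ((1 : Fin 2) : ℕ) = 1 := rfl
lemma fval_1_0 : ((0 : Fin 1) : ℕ) = 0 := rfl


set_option maxHeartbeats 4000000 in
set_option maxRecDepth 100000 in
theorem detN_eq_det (M : Matrix (Fin 5) (Fin 5) ℤ) :
    detN 5 (List.ofFn fun i => List.ofFn fun j => M i j) = M.det := by
  show detN 5 [[M 0 0, M 0 1, M 0 2, M 0 3, M 0 4],
    [M 1 0, M 1 1, M 1 2, M 1 3, M 1 4],
    [M 2 0, M 2 1, M 2 2, M 2 3, M 2 4],
    [M 3 0, M 3 1, M 3 2, M 3 3, M 3 4],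
    [M 4 0, M 4 1, M 4 2, M 4 3, M 4 4]] = M.det
  simp only [detN, show List.range 5 = [0,1,2,3,4] from rfl,
    show List.range 4 = [0,1,2,3] from rfl, show List.range 3 = [0,1,2] from rfl,
    show List.range 2 = [0,1] from rfl, show List.range 1 = [0] from rfl,
    List.map_cons, List.map_nil, List.sum_cons, List.sum_nil,
    List.eraseIdx_cons_zero, List.eraseIdx_cons_succ, List.eraseIdx_nil,
    List.getD_cons_zero, List.getD_cons_succ]
  simp only [Matrix.det_succ_row_zero, Fin.sum_univ_succ, Matrix.submatrix_apply,
    Matrix.submatrix_submatrix, Function.comp, Matrix.det_fin_one, Matrix.det_fin_zero,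
    Fin.sum_univ_zero, fsa_4_0_0, fsa_4_0_1, fsa_4_0_2, fsa_4_0_3, fsa_4_1_0, fsa_4_1_1, fsa_4_1_2, fsa_4_1_3, fsa_4_2_0, fsa_4_2_1, fsa_4_2_2, fsa_4_2_3, fsa_4_3_0, fsa_4_3_1, fsa_4_3_2, fsa_4_3_3, fsa_4_4_0, fsa_4_4_1, fsa_4_4_2, fsa_4_4_3, fsa_3_0_0, fsa_3_0_1, fsa_3_0_2, fsa_3_1_0, fsa_3_1_1, fsa_3_1_2, fsa_3_2_0, fsa_3_2_1, fsa_3_2_2, fsa_3_3_0, fsa_3_3_1, fsa_3_3_2, fsa_2_0_0, fsa_2_0_1, fsa_2_1_0, fsa_2_1_1, fsa_2_2_0, fsa_2_2_1, fsa_1_0_0, fsa_1_1_0, fsucc_4_0, fsucc_4_1, fsucc_4_2, fsucc_4_3, fsucc_3_0, fsucc_3_1, fsucc_3_2, fsucc_2_0, fsucc_2_1, fsucc_1_0, fval_5_0, fval_5_1, fval_5_2, fval_5_3, fval_5_4, fval_4_0, fval_4_1, fval_4_2, fval_4_3, fval_3_0, fval_3_1, fval_3_2, fval_2_0, fval_2_1,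 fval_1_0]

/-! ### rows and Good sets -/

def zrow (p : P3) : Fin 5 → ℤ :=
  ![1, if p.1 = 0 then 1 else 0, if p.2.1 = 0 then 1 else 0,
    if p.2.2 = 0 then 1 else 0, if p.2.2 = 1 then 1 else 0]

def rowlist (n : Fin 12) : List ℤ :=
  let p := dec12 n
  [1, if p.1 = 0 then 1 else 0, if p.2.1 = 0 then 1 else 0,
   if p.2.2 = 0 then 1 else 0, if p.2.2 = 1 then 1 else 0]

lemma rowlist_eq (n : Fin 12) : rowlist n = List.ofFn (zrow (dec12 n)) := by
  simp [rowlist, zrow, List.ofFn_succ]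

def lT (T : Finset (Fin 12)) : List (Fin 12) := (List.finRange 12).filter (· ∈ T)

def Good (T : Finset (Fin 12)) : Prop :=
  T.card = 5 ∧ (detN 5 ((lT T).map rowlist))^2 = 4

instance : DecidablePred Good := fun T => by unfold Good; infer_instance

lemma lT_nodup (T : Finset (Fin 12)) : (lT T).Nodup :=
  (List.nodup_finRange 12).filter _

lemma lT_toFinset (T : Finset (Fin 12)) : (lT T).toFinset = T := by
  ext x
  simp [lT, List.mem_filter, List.mem_finRange]

lemma lT_length (T : Finset (Fin 12)) : (lT T).length = T.card := by
  rw [← List.toFinset_card_of_nodup (lT_nodup T), lT_toFinset]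

lemma lT_mem {T : Finset (Fin 12)} {x : Fin 12} : x ∈ lT T ↔ x ∈ T := by
  simp [lT, List.mem_filter, List.mem_finRange]

/-! ### decidable facts -/

def T0 : Finset (Fin 12) := {0, 1, 5, 8, 9}

def goodList : List (Finset (Fin 12)) := [({0,1,5,8,9} : Finset (Fin 12)), ({0,1,5,8,10} : Finset (Fin 12)), ({0,2,4,7,9} : Finset (Fin 12)), ({0,2,4,7,11} : Finset (Fin 12)), ({0,4,5,7,9} : Finset (Fin 12)), ({0,4,5,8,9} : Finset (Fin 12)), ({0,4,7,8,9} : Finset (Fin 12)), ({0,4,7,9,11} : Finset (Fin 12)), ({0,5,7,8,9} : Finset (Fin 12)), ({0,5,8,9,10} : Finset (Fin 12)), ({1,2,3,6,10} : Finset (Fin 12)), ({1,2,3,6,11} : Finset (Fin 12)), ({1,3,5,6,10} : Finset (Fin 12)), ({1,3,5,8,10} : Finset (Fin 12)), ({1,3,6,8,10} : Finset (Fin 12)), ({1,3,6,10,11} : Finset (Fin 12)), ({1,5,6,8,10} : Finset (Fin 12)), ({1,5,8,9,10} : Finset (Fin 12)), ({2,3,4,6,11} : Finset (Fin 12)), ({2,3,4,7,11}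 : Finset (Fin 12)), ({2,3,6,7,11} : Finset (Fin 12)), ({2,3,6,10,11} : Finset (Fin 12)), ({2,4,6,7,11} : Finset (Fin 12)), ({2,4,7,9,11} : Finset (Fin 12))]

def combs : ℕ → List (Fin 12) → List (List (Fin 12))
  | 0, _ => [[]]
  | _+1, [] => []
  | n+1, a :: l => ((combs n l).map (a :: ·)) ++ combs (n+1) l

def chk (l : List (Fin 12)) : Bool :=
  !((detN 5 (l.map rowlist))^2 == 4) || decide (l.toFinset ∈ goodList)

def allP : List (List (Fin 12)) → Bool
  | [] => true
  | l :: r => if chk l then allP r else false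

set_option maxHeartbeats 4000000 in
set_option maxRecDepth 10000 in
theorem fact3a : allP (combs 5 (List.finRange 12)) = true := by decide

set_option maxHeartbeats 1000000 in
set_option maxRecDepth 10000 in
theorem fact2 : ∀ g : G24, T0.image (rho12 g) = T0 → g = 1 := by decide

def perms2 : List (Equiv.Perm (Fin 2)) := [1, Equiv.swap 0 1]

def perms3 : List (Equiv.Perm (Fin 3)) :=
  [1, Equiv.swap 0 1, Equiv.swap 0 2, Equiv.swap 1 2,
   Equiv.swap 0 1 * Equiv.swap 1 2, Equiv.swap 1 2 * Equiv.swap 0 1]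

def gList : List G24 :=
  perms2.flatMap fun a => perms2.flatMap fun b => perms3.map fun c => (a, b, c)

def chk2 : List (Finset (Fin 12)) → Bool
  | [] => true
  | T :: r => if gList.any (fun g => T0.image (rho12 g) == T) then chk2 r else false

set_option maxHeartbeats 1000000 in
set_option maxRecDepth 10000 in
theorem fact3b' : chk2 goodList = true := by decide

lemma chk2_mem : ∀ L, chk2 L = true → ∀ T ∈ L, ∃ g : G24, T0.image (rho12 g) = T := by
  intro L
  induction L with
  | nil => intro _ T h; cases h
  | cons a L ih =>
    intro h T hT
    by_cases hc : (gList.any fun g => T0.image (rho12 g) == a) = true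
    · rcases List.mem_cons.mp hT with rfl | hT'
      · obtain ⟨g, _, hg2⟩ := List.any_eq_true.mp hc
        exact ⟨g, by simpa using hg2⟩
      · exact ih (by simpa [chk2, hc] using h) T hT'
    · have hc' : (gList.any fun g => T0.image (rho12 g) == a) = false := by
        revert hc; cases (gList.any fun g => T0.image (rho12 g) == a) <;> simp
      exfalso
      simp [chk2, hc'] at h

set_option maxHeartbeats 1000000 in
set_option maxRecDepth 10000 in
theorem fact4 : ∀ g : G24, Good (T0.image (rho12 g)) := by decide

lemma allP_mem : ∀ L, allP L = true → ∀ l ∈ L, chk l = true := by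
  intro L
  induction L with
  | nil => intro _ l hl; cases hl
  | cons a L ih =>
    intro h l hl
    by_cases hc : chk a = true
    · have h' : allP L = true := by simpa [allP, hc] using h
      rcases List.mem_cons.mp hl with rfl | hl'
      · exact hc
      · exact ih h' l hl'
    · exfalso
      have hc' : chk a = false := by revert hc; cases chk a <;> simp
      simp [allP, hc'] at h

lemma filter_mem_combs (p : Fin 12 → Bool) :
    ∀ (L : List (Fin 12)) (n : ℕ), (L.filter p).length = n → L.filter p ∈ combs n L := by
  intro L
  induction L with
  | nil =>
    intro n h
    simp only [List.filter_nil, List.length_nil] at h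
    subst h
    simp [combs]
  | cons a L ih =>
    intro n h
    by_cases hp : p a
    · rw [List.filter_cons_of_pos hp] at h ⊢
      cases n with
      | zero => simp at h
      | succ m =>
        simp only [List.length_cons, Nat.succ.injEq] at h
        simp only [combs, List.mem_append]
        exact Or.inl (List.mem_map.mpr ⟨L.filter p, ih m h, rfl⟩)
    · rw [List.filter_cons_of_neg hp] at h ⊢
      cases n with
      | zero =>
        rw [List.length_eq_zero_iff] at h
        simp [h, combs]
      | succ m =>
        simp only [combs, List.mem_append]
        exact Or.inr (ih (m+1) h)

/-! ### matrices from index tuples -/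

def Mq (q : Fin 5 → Fin 12) : Matrix (Fin 5) (Fin 5) ℤ :=
  Matrix.of fun i => zrow (dec12 (q i))

lemma classMat_eq (q : Fin 5 → Fin 12) :
    classMat21 (fun i => vtx (dec12 (q i))) = ((Int.castRingHom ℝ).mapMatrix (Mq q)) := by
  ext i j
  fin_cases j <;>
    simp [classMat21, Mq, vtx, zrow, RingHom.mapMatrix_apply, Matrix.map_apply] <;>
    split_ifs <;> norm_num

lemma sq_eq_four {d : ℤ} : d^2 = 4 ↔ |d| = 2 := by
  constructor
  · intro h
    have h2 : (|d| - 2) * (|d| + 2) = 0 := by nlinarith [sq_abs d]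
    rcases mul_eq_zero.mp h2 with h3 | h3
    · linarith
    · have := abs_nonneg d; linarith
  · intro h
    have : d^2 = |d|^2 := (sq_abs d).symm
    rw [this, h]; norm_num

lemma absdet (q : Fin 5 → Fin 12) :
    |(classMat21 (fun i => vtx (dec12 (q i)))).det| = 2 ↔ ((Mq q).det)^2 = 4 := by
  rw [classMat_eq, ← RingHom.map_det, sq_eq_four,
    show ((Int.castRingHom ℝ) (Mq q).det) = (((Mq q).det : ℤ) : ℝ) from rfl, ← Int.cast_abs]
  exact ⟨fun h => by exact_mod_cast h, fun h => by exact_mod_cast h⟩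

lemma ofFn_cast {α : Type*} {m n : ℕ} (h : m = n) (f : Fin m → α) :
    List.ofFn f = List.ofFn (fun i : Fin n => f (Fin.cast h.symm i)) := by
  subst h; rfl

lemma map_eq_ofFn {α β : Type*} (l : List α) (f : α → β) (h : l.length = 5) :
    l.map f = List.ofFn (fun i : Fin 5 => f (l.get (Fin.cast h.symm i))) := by
  conv_lhs => rw [← List.ofFn_get l]
  rw [List.map_ofFn, ofFn_cast h (f ∘ l.get)]
  rfl

lemma detN_lT {T : Finset (Fin 12)} (hlen : (lT T).length = 5) :
    detN 5 ((lT T).map rowlist) = (Mq (fun i => (lT T).get (Fin.cast hlen.symm i))).det := by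
  rw [map_eq_ofFn _ _ hlen, ← detN_eq_det]
  congr 1

lemma exists_perm {q q' : Fin 5 → Fin 12} (hq : Function.Injective q)
    (hq' : Function.Injective q') (hr : Set.range q = Set.range q') :
    ∃ σ : Equiv.Perm (Fin 5), q = q' ∘ σ := by
  classical
  have hmem : ∀ i, q i ∈ Set.range q' := fun i => hr ▸ Set.mem_range_self i
  choose σf hσf using hmem
  have hinj : Function.Injective σf := fun i j hij => hq (by rw [← hσf, ← hσf, hij])
  refine ⟨Equiv.ofBijective σf ((Fintype.bijective_iff_injective_and_card σf).mpr
    ⟨hinj, rfl⟩), funext fun i => ?_⟩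
  exact (hσf i).symm

lemma det_sq_perm {q q' : Fin 5 → Fin 12} (σ : Equiv.Perm (Fin 5)) (hσ : q = q' ∘ σ) :
    ((Mq q).det)^2 = ((Mq q').det)^2 := by
  have hM : Mq q = (Mq q').submatrix σ id := by
    ext i j
    simp [Mq, hσ, Matrix.submatrix_apply, Function.comp]
  rw [hM, Matrix.det_permute σ (Mq q'), mul_pow]
  rcases Int.units_eq_one_or (Equiv.Perm.sign σ) with h | h <;> rw [h] <;> norm_num

/-! ### set-level correspondence -/

def vSet (T : Finset (Fin 12)) : Set (Fin 2 ⊕ (Fin 2 ⊕ Fin 3) → ℝ) :=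
  (fun n => vtx (dec12 n)) '' ↑T

lemma vSet_inj {T T' : Finset (Fin 12)} (h : vSet T = vSet T') : T = T' := by
  have hinj : Function.Injective (fun n => vtx (dec12 n)) := vtx_inj.comp dec12_inj
  exact Finset.coe_injective (Set.image_injective.mpr hinj h)

lemma vSet_image (g : G24) (T : Finset (Fin 12)) :
    vSet (T.image (rho12 g)) = act g '' vSet T := by
  simp only [vSet, Finset.coe_image, Set.image_image]
  exact Set.image_congr fun a _ => by rw [act_vtx, rho12, dec_enc]

lemma class2_iff {s : Set (Fin 2 ⊕ (Fin 2 ⊕ Fin 3) → ℝ)} :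
    IsClass2Set s ↔ ∃ T : Finset (Fin 12), Good T ∧ s = vSet T := by
  constructor
  · rintro ⟨w, rfl, hv, hdet⟩
    choose p hp using fun r => vertex_to_vtx (hv r)
    have hwinj : Function.Injective w := by
      intro i j hij
      by_contra hne
      have hrow : classMat21 w i = classMat21 w j := by
        funext k
        simp only [classMat21, Matrix.of_apply]
        rw [hij]
      have : (classMat21 w).det = 0 := Matrix.det_zero_of_row_eq hne hrow
      rw [this] at hdet
      norm_num at hdet
    set q : Fin 5 → Fin 12 := fun r => enc12 (p r) with hqdef
    have hqp : ∀ r, dec12 (q r) = p r := fun r => dec_enc (p r)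
    have hw : w = fun r => vtx (dec12 (q r)) := funext fun r => by rw [hp r, hqp r]
    have hqinj : Function.Injective q := by
      intro i j h
      apply hwinj
      rw [hw]
      simp only [h]
    set T := Finset.image q Finset.univ with hTdef
    have h5 : T.card = 5 := by
      rw [hTdef, Finset.card_image_of_injective _ hqinj, Finset.card_univ, Fintype.card_fin]
    have hlen : (lT T).length = 5 := by rw [lT_length, h5]
    set q' : Fin 5 → Fin 12 := fun i => (lT T).get (Fin.cast hlen.symm i) with hq'def
    have hq'inj : Function.Injective q' := by
      intro i j h
      have h2 := List.nodup_iff_injective_get.mp (lT_nodup T) h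
      simpa [Fin.ext_iff] using h2
    have hrangeq : Set.range q = ↑T := by
      rw [hTdef]
      ext x
      simp [Set.mem_range, Finset.coe_image]
    have hrangeq' : Set.range q' = ↑T := by
      ext x
      constructor
      · rintro ⟨i, rfl⟩
        have : q' i ∈ lT T := List.get_mem _ _
        exact lT_mem.mp this
      · intro hx
        obtain ⟨i0, hi0⟩ := List.mem_iff_get.mp (lT_mem.mpr hx)
        exact ⟨Fin.cast hlen i0, by rw [hq'def]; simpa using hi0⟩
    obtain ⟨σ, hσ⟩ := exists_perm hqinj hq'inj (by rw [hrangeq, hrangeq'])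
    have hdet2 : ((Mq q).det)^2 = 4 := by
      rw [← absdet q, ← hw]
      exact hdet
    refine ⟨T, ⟨h5, ?_⟩, ?_⟩
    · rw [detN_lT hlen, ← hq'def, ← det_sq_perm σ hσ]
      exact hdet2
    · rw [hw, show (fun r => vtx (dec12 (q r))) = (fun n => vtx (dec12 n)) ∘ q from rfl,
        Set.range_comp, hrangeq]
      rfl
  · rintro ⟨T, ⟨h5, hdet⟩, rfl⟩
    have hlen : (lT T).length = 5 := by rw [lT_length, h5]
    set q : Fin 5 → Fin 12 := fun i => (lT T).get (Fin.cast hlen.symm i) with hqdef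
    refine ⟨fun i => vtx (dec12 (q i)), ?_, fun r => vtx_vertex _, ?_⟩
    · ext x
      simp only [vSet, Set.mem_image, Set.mem_range, Finset.mem_coe]
      constructor
      · rintro ⟨n, hn, rfl⟩
        obtain ⟨i0, hi0⟩ := List.mem_iff_get.mp (lT_mem.mpr hn)
        exact ⟨Fin.cast hlen i0, by rw [hqdef]; simp only []; rw [show Fin.cast hlen.symm
          (Fin.cast hlen i0) = i0 from rfl, hi0]⟩
      · rintro ⟨i, rfl⟩
        exact ⟨q i, lT_mem.mp (List.get_mem _ _), rfl⟩
    · rw [absdet q, ← detN_lT hlen, hdet]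

lemma good_orbit {T : Finset (Fin 12)} :
    Good T ↔ ∃ g : G24, T0.image (rho12 g) = T := by
  constructor
  · rintro ⟨h5, hdet⟩
    have hlen : (lT T).length = 5 := by rw [lT_length, h5]
    have hmem : lT T ∈ combs 5 (List.finRange 12) :=
      filter_mem_combs _ _ _ hlen
    have hchk := allP_mem _ fact3a _ hmem
    simp only [chk, hdet, beq_self_eq_true, Bool.not_true, Bool.false_or,
      decide_eq_true_eq] at hchk
    rw [lT_toFinset] at hchk
    exact chk2_mem _ fact3b' T hchk
  · rintro ⟨g, rfl⟩
    exact fact4 g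

lemma class2_iff_orbit {s : Set (Fin 2 ⊕ (Fin 2 ⊕ Fin 3) → ℝ)} :
    IsClass2Set s ↔ ∃ g : G24, s = act g '' vSet T0 := by
  rw [class2_iff]
  constructor
  · rintro ⟨T, hg, rfl⟩
    obtain ⟨g, rfl⟩ := good_orbit.mp hg
    exact ⟨g, by rw [vSet_image]⟩
  · rintro ⟨g, rfl⟩
    exact ⟨T0.image (rho12 g), good_orbit.mpr ⟨g, rfl⟩, (vSet_image _ _).symm⟩

lemma orbit_inj {g h : G24} (hE : act g '' vSet T0 = act h '' vSet T0) : g = h := by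
  rw [← vSet_image, ← vSet_image] at hE
  have h1 := vSet_inj hE
  have h2 : (T0.image (rho12 g)).image (rho12 h⁻¹) = (T0.image (rho12 h)).image (rho12 h⁻¹) := by
    rw [h1]
  rw [Finset.image_image, Finset.image_image] at h2
  have e1 : (rho12 h⁻¹ ∘ rho12 g) = rho12 (g * h⁻¹) := funext fun n => rho12_comp _ _ _
  have e2 : (rho12 h⁻¹ ∘ rho12 h) = rho12 (h * h⁻¹) := funext fun n => rho12_comp _ _ _
  rw [e1, e2, mul_inv_cancel] at h2
  have h3 : T0.image (rho12 (g * h⁻¹)) = T0 := by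
    rw [h2]
    have : rho12 (1 : G24) = id := funext fun n => rho12_one n
    rw [this, Finset.image_id]
  have := fact2 _ h3
  exact mul_inv_eq_one.mp this

end Stmt18Aux


open Stmt18Aux in
/-- There are exactly 24 five-element vertex sets of `Δ¹ × Δ¹ × Δ²` spanning a simplex of
class 2, and the group of within-factor coordinate permutations (of order 24) acts simply
transitively on them. -/

theorem stmt18 :
    Nat.card {s : Set (Fin 2 ⊕ (Fin 2 ⊕ Fin 3) → ℝ) // IsClass2Set s} = 24 ∧
    ∀ s₁ s₂, IsClass2Set s₁ → IsClass2Set s₂ →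
      ∃! g : Equiv.Perm (Fin 2) × Equiv.Perm (Fin 2) × Equiv.Perm (Fin 3),
        act g '' s₁ = s₂ := by
  constructor
  · have hbij : Function.Bijective
        (fun g : G24 => (⟨act g '' vSet T0, class2_iff_orbit.mpr ⟨g, rfl⟩⟩ :
          {s : Set (Fin 2 ⊕ (Fin 2 ⊕ Fin 3) → ℝ) // IsClass2Set s})) := by
      constructor
      · intro g h hgh
        exact orbit_inj (congrArg Subtype.val hgh)
      · rintro ⟨s, hs⟩
        obtain ⟨g, rfl⟩ := class2_iff_orbit.mp hs
        exact ⟨g, rfl⟩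
    rw [← Nat.card_eq_of_bijective _ hbij]
    rw [Nat.card_eq_fintype_card]
    norm_num [Fintype.card_prod, Fintype.card_perm, Nat.factorial]
  · intro s₁ s₂ h₁ h₂
    obtain ⟨g₁, rfl⟩ := class2_iff_orbit.mp h₁
    obtain ⟨g₂, rfl⟩ := class2_iff_orbit.mp h₂
    refine ⟨g₁⁻¹ * g₂, ?_, ?_⟩
    · show act (g₁⁻¹ * g₂) '' (act g₁ '' vSet T0) = act g₂ '' vSet T0
      rw [Set.image_image]
      simp only [act_comp]
      rw [mul_inv_cancel_left]
    · intro g hg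
      rw [Set.image_image] at hg
      simp only [act_comp] at hg
      have h3 : g₁ * g = g₂ := orbit_inj hg
      rw [← h3, inv_mul_cancel_left]
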